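/- For every nonnegative integer L and integer N ≥ 0 of the same parity as L with N ≤ L, the coefficient a_{LN}(k) = ((2L+1)/2) ∫_{-1}^1 J_N(kx) P_L(x) dx equals (√π 2^{-2L-2} (2L+1) k^L i^{L-N} (1+(-1)^{L+N}) / Γ(L+3/2)) · binomial(L, (L-N)/2) · ₂F₃(L/2+1/2, L/2+1; L+3/2, (L-N)/2+1, (L+N)/2+1; -k²/4). -/

import Mathlib

/-- Real Bessel function of the first kind of nonnegative integer order. -/
noncomputable def besselJR (n : ℕ) (x : ℝ) : ℝ :=
  ∑' m : ℕ, (-1 : ℝ) ^ m / ((m.factorial : ℝ) * ((m + n).factorial : ℝ)) * (x / 2) ^ (2 * m + n)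

/-- The Legendre polynomials, defined by the three-term recurrence
`(n+2) P_{n+2} = (2n+3) x P_{n+1} - (n+1) P_n` with `P_0 = 1`, `P_1 = X`. -/
noncomputable def legP : ℕ → Polynomial ℝ
  | 0 => 1
  | 1 => Polynomial.X
  | (n + 2) =>
      Polynomial.C ((n + 2 : ℝ)⁻¹) *
        ((2 * (n : ℝ) + 3) • (Polynomial.X * legP (n + 1)) - ((n : ℝ) + 1) • legP n)

/-- The Fourier–Legendre coefficient of `x ↦ J_N(k x)` on `[-1,1]`. -/
noncomputable def aLN (L N : ℕ) (k : ℝ) : ℝ :=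
  ((2 * (L : ℝ) + 1) / 2) * ∫ x in (-1:ℝ)..1, besselJR N (k * x) * (legP L).eval x

/-- The generalized hypergeometric series `ₚF_q(a; b; z)` with upper parameter list `a`
and lower parameter list `b`, `Σ_{k≥0} ∏(aᵢ)_k / (∏(bⱼ)_k k!) z^k`. -/
noncomputable def hyp (a b : List ℂ) (z : ℂ) : ℂ :=
  ∑' k : ℕ, ((a.map (fun p => (ascPochhammer ℂ k).eval p)).prod /
    (b.map (fun p => (ascPochhammer ℂ k).eval p)).prod) * z ^ k / (k.factorial : ℂ)



open scoped Nat
open MeasureTheory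

lemma gammaHalf (n : ℕ) : Complex.Gamma ((n:ℂ) + 1/2) =
    (Real.sqrt Real.pi : ℂ) * (2*n)! / (4^n * (n)!) := by
  induction n with
  | zero =>
    rw [show ((0:ℕ):ℂ) + 1/2 = ((1/2:ℝ):ℂ) by norm_num, Complex.Gamma_ofReal,
      Real.Gamma_one_half_eq]
    norm_num
  | succ n ih =>
    have hne : ((n:ℂ) + 1/2) ≠ 0 := by
      intro h
      have := congrArg Complex.re h
      simp [Complex.add_re] at this
      nlinarith [this, Nat.cast_nonneg (α := ℝ) n]
    have h1 : ((n+1:ℕ):ℂ) + 1/2 = ((n:ℂ) + 1/2) + 1 := by push_cast; ring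
    rw [h1, Complex.Gamma_add_one _ hne, ih]
    have h2 : (2*(n+1))! = (2*n+2) * ((2*n+1) * (2*n)!) := by
      rw [show 2*(n+1) = (2*n+1)+1 by ring, Nat.factorial_succ, Nat.factorial_succ]
    have h3 : (n+1)! = (n+1) * (n)! := Nat.factorial_succ n
    rw [h2, h3]
    have hf1 : ((2*n)! : ℂ) ≠ 0 := Nat.cast_ne_zero.2 (2*n).factorial_ne_zero
    have hf2 : ((n)! : ℂ) ≠ 0 := Nat.cast_ne_zero.2 (n).factorial_ne_zero
    have h4 : (4:ℂ) ^ n ≠ 0 := pow_ne_zero _ (by norm_num)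
    have h5 : ((n:ℂ) + 1) ≠ 0 := Nat.cast_add_one_ne_zero n
    push_cast
    field_simp
    ring


lemma poch_nat (c j : ℕ) : (ascPochhammer ℂ j).eval ((c:ℂ)+1) = ((c+j)! : ℂ) / (c)! := by
  have hf : ((c)! : ℂ) ≠ 0 := Nat.cast_ne_zero.2 (c).factorial_ne_zero
  induction j with
  | zero => simp [div_self hf]
  | succ j ih =>
    rw [ascPochhammer_succ_eval, ih]
    have e1 : ((c+(j+1))! : ℂ) = ((c:ℂ)+j+1) * ((c+j)! : ℂ) := by
      rw [show c+(j+1) = (c+j)+1 from rfl, Nat.factorial_succ]; push_cast; ring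
    rw [e1]
    field_simp
    ring

lemma poch_a (L j : ℕ) :
    (ascPochhammer ℂ j).eval ((L:ℂ)/2 + 1/2) * (ascPochhammer ℂ j).eval ((L:ℂ)/2 + 1) =
      ((L+2*j)! : ℂ) / ((L)! * 4^j) := by
  have hf1 : ((L)! : ℂ) ≠ 0 := Nat.cast_ne_zero.2 (L).factorial_ne_zero
  induction j with
  | zero => simp [div_self hf1]
  | succ j ih =>
    rw [ascPochhammer_succ_eval, ascPochhammer_succ_eval]
    have key : ((ascPochhammer ℂ j).eval ((L:ℂ)/2+1/2) * ((L:ℂ)/2+1/2+j)) *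
        ((ascPochhammer ℂ j).eval ((L:ℂ)/2+1) * ((L:ℂ)/2+1+j)) =
        ((ascPochhammer ℂ j).eval ((L:ℂ)/2+1/2) * (ascPochhammer ℂ j).eval ((L:ℂ)/2+1)) *
        (((L:ℂ)/2+1/2+j) * ((L:ℂ)/2+1+j)) := by ring
    rw [key, ih]
    have e1 : ((L+2*(j+1))! : ℂ) = ((L:ℂ)+2*j+2) * (((L:ℂ)+2*j+1) * ((L+2*j)! : ℂ)) := by
      rw [show L+2*(j+1) = ((L+2*j)+1)+1 from by ring, Nat.factorial_succ, Nat.factorial_succ]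
      push_cast; ring
    rw [e1]
    have h4 : (4:ℂ) ^ j ≠ 0 := pow_ne_zero _ (by norm_num)
    field_simp
    ring

lemma poch_b1 (L j : ℕ) :
    (ascPochhammer ℂ j).eval ((L:ℂ) + 3/2) =
      ((2*L+2*j+2)! : ℂ) * ((L+1)! : ℂ) / (4^j * ((L+j+1)! : ℂ) * ((2*L+2)! : ℂ)) := by
  have hf1 : ((L+1)! : ℂ) ≠ 0 := Nat.cast_ne_zero.2 (L+1).factorial_ne_zero
  have hf2 : ((2*L+2)! : ℂ) ≠ 0 := Nat.cast_ne_zero.2 (2*L+2).factorial_ne_zero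
  induction j with
  | zero =>
    rw [show 2*L+2*0+2 = 2*L+2 from by ring, show L+0+1 = L+1 from by ring]
    simp
    rw [mul_div_assoc]
    field_simp
  | succ j ih =>
    rw [ascPochhammer_succ_eval, ih]
    have e1 : ((2*L+2*(j+1)+2)! : ℂ) =
        (2*(L:ℂ)+2*j+4) * ((2*(L:ℂ)+2*j+3) * ((2*L+2*j+2)! : ℂ)) := by
      rw [show 2*L+2*(j+1)+2 = ((2*L+2*j+2)+1)+1 from by ring, Nat.factorial_succ,
        Nat.factorial_succ]
      push_cast; ring
    have e2 : ((L+(j+1)+1)! : ℂ) = ((L:ℂ)+j+2) * ((L+j+1)! : ℂ) := by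
      rw [show L+(j+1)+1 = (L+j+1)+1 from by ring, Nat.factorial_succ]; push_cast; ring
    rw [e1, e2]
    have hf3 : ((L+j+1)! : ℂ) ≠ 0 := Nat.cast_ne_zero.2 (L+j+1).factorial_ne_zero
    have h4 : (4:ℂ) ^ j ≠ 0 := pow_ne_zero _ (by norm_num)
    have h5 : ((L:ℂ)+j+2) ≠ 0 := by
      have : ((L:ℂ)+j+2) = ((L+j+2 : ℕ) : ℂ) := by push_cast; ring
      rw [this]
      exact Nat.cast_ne_zero.2 (by omega)
    field_simp
    ring


noncomputable def mom (n L : ℕ) : ℝ := ∫ x in (-1:ℝ)..1, x^n * (legP L).eval x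

lemma legP_cont (L : ℕ) : Continuous fun x : ℝ => (legP L).eval x := (legP L).continuous_aeval

lemma intble (n L : ℕ) : IntervalIntegrable (fun x : ℝ => x^n * (legP L).eval x)
    MeasureTheory.volume (-1) 1 :=
  (Continuous.mul (continuous_pow n) (legP_cont L)).intervalIntegrable _ _

lemma mom_rec (n L : ℕ) : mom n (L+2) =
    ((2*(L:ℝ)+3) * mom (n+1) (L+1) - ((L:ℝ)+1) * mom n L) / ((L:ℝ)+2) := by
  have hev : ∀ x : ℝ, x^n * (legP (L+2)).eval x =
      ((L:ℝ)+2)⁻¹ * ((2*(L:ℝ)+3) * (x^(n+1) * (legP (L+1)).eval x)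
        - ((L:ℝ)+1) * (x^n * (legP L).eval x)) := by
    intro x
    show x^n * (Polynomial.C ((L + 2 : ℝ)⁻¹) *
        ((2 * (L : ℝ) + 3) • (Polynomial.X * legP (L + 1)) - ((L : ℝ) + 1) • legP L)).eval x = _
    simp [Polynomial.eval_mul, Polynomial.eval_smul, pow_succ, smul_eq_mul]
    ring
  unfold mom
  rw [intervalIntegral.integral_congr (fun x _ => hev x)]
  rw [intervalIntegral.integral_const_mul]
  rw [intervalIntegral.integral_sub ((intble (n+1) (L+1)).const_mul _) ((intble n L).const_mul _)]
  rw [intervalIntegral.integral_const_mul, intervalIntegral.integral_const_mul]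
  rw [div_eq_inv_mul]

lemma mom_zeroth (n : ℕ) : mom n 0 = (1 - (-1:ℝ)^(n+1))/(n+1) := by
  unfold mom
  simp only [show legP 0 = 1 from rfl, Polynomial.eval_one, mul_one]
  rw [integral_pow]
  norm_num

lemma mom_first (n : ℕ) : mom n 1 = (1 - (-1:ℝ)^(n+2))/(n+2) := by
  unfold mom
  simp only [show legP 1 = Polynomial.X from rfl, Polynomial.eval_X]
  rw [intervalIntegral.integral_congr (fun x _ => (pow_succ x n).symm), integral_pow]
  push_cast
  norm_num
  ring_nf

lemma mom_odd : ∀ L n, (n + L) % 2 = 1 → mom n L = 0 := by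
  intro L
  induction L using Nat.strong_induction_on with
  | _ L ih =>
    match L with
    | 0 =>
      intro n h
      rw [mom_zeroth, Even.neg_one_pow (Nat.even_iff.2 (by omega)), sub_self, zero_div]
    | 1 =>
      intro n h
      rw [mom_first, Even.neg_one_pow (Nat.even_iff.2 (by omega)), sub_self, zero_div]
    | (M+2) =>
      intro n h
      rw [mom_rec, ih (M+1) (by omega) (n+1) (by omega), ih M (by omega) n (by omega)]
      simp

lemma fac_ne (n : ℕ) : ((n)! : ℝ) ≠ 0 := Nat.cast_ne_zero.2 (n).factorial_ne_zero

lemma fac_cast_succ (n : ℕ) : ((n+1)! : ℝ) = ((n:ℝ)+1) * ((n)! : ℝ) := by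
  rw [Nat.factorial_succ]; push_cast; ring

lemma mom_val : ∀ L a, mom (L+2*a) L =
    2^(L+1) * ((L+2*a)! : ℝ) * ((L+a)! : ℝ) / (((a)! : ℝ) * ((2*L+2*a+1)! : ℝ)) := by
  intro L
  induction L using Nat.strong_induction_on with
  | _ L ih =>
    match L with
    | 0 =>
      intro a
      rw [mom_zeroth, Odd.neg_one_pow (Nat.odd_iff.2 (by omega))]
      simp only [Nat.zero_add, Nat.zero_mul, Nat.mul_zero, Nat.add_zero, zero_add, Nat.reduceMul]
      rw [show 2*a+1 = (2*a)+1 from rfl, fac_cast_succ]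
      have := fac_ne (2*a)
      have := fac_ne a
      have h1 : ((2*a:ℕ):ℝ) + 1 ≠ 0 := by positivity
      push_cast
      field_simp
      ring
    | 1 =>
      intro a
      rw [show (1:ℕ)+2*a = 2*a+1 from by ring, mom_first, Odd.neg_one_pow (Nat.odd_iff.2 (by omega))]
      rw [show 2*1+2*a+1 = ((2*a+1)+1)+1 from by ring, fac_cast_succ ((2*a+1)+1),
        fac_cast_succ (2*a+1), show (1:ℕ)+a = a+1 from by ring, fac_cast_succ a]
      have := fac_ne (2*a+1)
      have := fac_ne a
      have h1 : ((2*a+1:ℕ):ℝ) + 1 ≠ 0 := by positivity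
      have h2 : (((2*a+1)+1:ℕ):ℝ) + 1 ≠ 0 := by positivity
      have h3 : ((a:ℕ):ℝ) + 1 ≠ 0 := by positivity
      push_cast
      field_simp
      ring
    | (M+2) =>
      intro a
      rw [mom_rec]
      rw [show M+2+2*a+1 = (M+1)+2*(a+1) from by ring]
      rw [ih (M+1) (by omega) (a+1)]
      rw [show M+2+2*a = M+2*(a+1) from by ring]
      rw [ih M (by omega) (a+1)]
      rw [show (M+1)+2*(a+1) = (M+2*(a+1))+1 from by ring]
      rw [show (M+1)+(a+1) = (M+(a+1))+1 from by ring]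
      rw [show 2*(M+1)+2*(a+1)+1 = ((2*M+2*(a+1)+1)+1)+1 from by ring]
      rw [show M+2+a = (M+(a+1))+1 from by ring]
      rw [show 2*(M+2)+2*a+1 = ((2*M+2*(a+1)+1)+1)+1 from by ring]
      simp only [fac_cast_succ]
      have n1 := fac_ne a
      have n2 := fac_ne (M+(a+1))
      have n3 := fac_ne (2*M+2*(a+1)+1)
      have n4 := fac_ne (M+2*(a+1))
      have n5 : ((a:ℝ)+1) ≠ 0 := by positivity
      have n6 : ((M:ℝ)+2) ≠ 0 := by positivity
      have n7 : ((((2*M+2*(a+1)+1 : ℕ) : ℝ))+1) ≠ 0 := by positivity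
      have n8 : ((((2*M+2*(a+1)+1 : ℕ) : ℝ))+1+1) ≠ 0 := by positivity
      push_cast at *
      field_simp
      ring

lemma mom_lt : ∀ L n, n < L → mom n L = 0 := by
  intro L
  induction L using Nat.strong_induction_on with
  | _ L ih =>
    match L with
    | 0 => intro n h; omega
    | 1 =>
      intro n h
      rw [show n = 0 from by omega, mom_first]
      norm_num
    | (M+2) =>
      intro n h
      rw [mom_rec]
      rcases lt_trichotomy n M with h1 | h1 | h1
      · rw [ih (M+1) (by omega) (n+1) (by omega), ih M (by omega) n h1]
        simp
      · subst h1
        have v1 : mom (n+1) (n+1) = mom ((n+1)+2*0) (n+1) := by norm_num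
        have v0 : mom n n = mom (n+2*0) n := by norm_num
        rw [v1, mom_val (n+1) 0, v0, mom_val n 0]
        simp only [Nat.mul_zero, Nat.add_zero]
        rw [show 2*(n+1)+1 = ((2*n+1)+1)+1 from by ring, fac_cast_succ ((2*n+1)+1),
          fac_cast_succ (2*n+1), show 2*n+1 = (2*n)+1 from rfl, fac_cast_succ (2*n),
          fac_cast_succ n]
        have n1 := fac_ne n
        have n2 := fac_ne (2*n)
        have n3 : ((n:ℝ)+2) ≠ 0 := by positivity
        have n4 : ((2*n:ℕ):ℝ)+1 ≠ 0 := by positivity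
        have n5 : ((2*n:ℕ):ℝ)+1+1 ≠ 0 := by positivity
        rw [div_eq_zero_iff]
        left
        rw [sub_eq_zero]
        push_cast at *
        field_simp
        ring
      · have hn : n = M+1 := by omega
        subst hn
        rw [mom_odd (M+1) (M+1+1) (by omega), mom_odd M (M+1) (by omega)]
        simp


noncomputable def cBes (N : ℕ) (k : ℝ) (m : ℕ) : ℝ :=
  (-1 : ℝ)^m / ((m)! * ((m+N)! : ℝ)) * (k/2)^(2*m+N)

lemma abs_cBes (N : ℕ) (k : ℝ) (m : ℕ) :
    |cBes N k m| = (|k|/2)^(2*m+N) / (((m)! : ℝ) * ((m+N)! : ℝ)) := by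
  rw [cBes, abs_mul, abs_div, abs_pow, abs_pow, abs_neg, abs_one, one_pow, abs_div, abs_mul,
    Nat.abs_cast, Nat.abs_cast, abs_two]
  ring

lemma summable_cBes_abs (N : ℕ) (k : ℝ) : Summable (fun m => |cBes N k m|) := by
  have key : ∀ m, |cBes N k m| ≤ (|k|/2)^N * (((|k|/2)^2)^m / (m)!) := by
    intro m
    rw [abs_cBes]
    have h1 : (|k|/2)^(2*m+N) / (((m)! : ℝ) * ((m+N)! : ℝ)) ≤ (|k|/2)^(2*m+N) / ((m)! : ℝ) := by
      apply div_le_div_of_nonneg_left (by positivity) (by positivity)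
      have : (1:ℝ) ≤ ((m+N)! : ℝ) := by exact_mod_cast Nat.one_le_iff_ne_zero.2 (m+N).factorial_ne_zero
      nlinarith [(Nat.cast_pos (α := ℝ)).2 (Nat.factorial_pos m)]
    refine h1.trans (le_of_eq ?_)
    rw [pow_add, pow_mul]
    ring
  apply Summable.of_nonneg_of_le (fun m => abs_nonneg _) key
  apply Summable.mul_left
  simpa [div_eq_mul_inv] using Real.summable_pow_div_factorial ((|k|/2)^2)

lemma summable_cBes (N : ℕ) (k : ℝ) : Summable (cBes N k) :=
  (summable_cBes_abs N k).of_abs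

lemma besselJR_eq (N : ℕ) (k x : ℝ) :
    besselJR N (k*x) = ∑' m, cBes N k m * x^(2*m+N) := by
  unfold besselJR cBes
  apply tsum_congr
  intro m
  rw [show k*x/2 = (k/2)*x from by ring, mul_pow]
  ring

lemma aLN_series (L N : ℕ) (k : ℝ) :
    aLN L N k = ((2*(L:ℝ)+1)/2) * ∑' m, cBes N k m * mom (2*m+N) L := by
  unfold aLN
  congr 1
  have hint : ∀ x:ℝ, besselJR N (k*x) * (legP L).eval x
      = ∑' m, cBes N k m * x^(2*m+N) * (legP L).eval x := by
    intro x; rw [besselJR_eq, tsum_mul_right]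
  rw [intervalIntegral.integral_congr (fun x _ => hint x)]
  rw [intervalIntegral.integral_of_le (by norm_num : (-1:ℝ) ≤ 1)]
  obtain ⟨C, hC⟩ := (isCompact_Icc : IsCompact (Set.Icc (-1:ℝ) 1)).exists_bound_of_continuousOn
    (legP_cont L).continuousOn
  have hC0 : 0 ≤ C := le_trans (norm_nonneg _) (hC 0 (by norm_num))
  set f : ℕ → ℝ → ℝ := fun m x => cBes N k m * x^(2*m+N) * (legP L).eval x with hf
  have hmeas : ∀ m, Integrable (f m) (volume.restrict (Set.Ioc (-1:ℝ) 1)) := fun m =>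
    ((continuous_const.mul (continuous_pow _)).mul (legP_cont L)).integrableOn_Ioc
  have hvol : volume (Set.Ioc (-1:ℝ) 1) < ⊤ := by
    rw [Real.volume_Ioc]; exact ENNReal.ofReal_lt_top
  have hvol2 : (volume (Set.Ioc (-1:ℝ) 1)).toReal = 2 := by
    rw [Real.volume_Ioc]; rw [ENNReal.toReal_ofReal (by norm_num)]; norm_num
  have hbound : ∀ m, (∫ x in Set.Ioc (-1:ℝ) 1, ‖f m x‖) ≤ |cBes N k m| * C * 2 := by
    intro m
    have nn : 0 ≤ ∫ x in Set.Ioc (-1:ℝ) 1, ‖f m x‖ :=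
      MeasureTheory.integral_nonneg (fun x => norm_nonneg _)
    rw [← Real.norm_of_nonneg nn]
    have := MeasureTheory.norm_setIntegral_le_of_norm_le_const (μ := volume)
      (f := fun x => ‖f m x‖) (C := |cBes N k m| * C) hvol ?_
    · rw [measureReal_def, hvol2] at this; linarith
    · intro x hx
      rw [Real.norm_of_nonneg (norm_nonneg _), hf]
      simp only [Real.norm_eq_abs]
      rw [abs_mul, abs_mul, abs_pow]
      have hx1 : |x| ≤ 1 := abs_le.2 ⟨le_of_lt hx.1, hx.2⟩
      have h2 : |x|^(2*m+N) ≤ 1 := pow_le_one₀ (abs_nonneg x) hx1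
      have h3 : |(legP L).eval x| ≤ C := hC x ⟨le_of_lt hx.1, hx.2⟩
      calc |cBes N k m| * |x|^(2*m+N) * |(legP L).eval x|
          ≤ |cBes N k m| * 1 * C := by
            apply mul_le_mul (mul_le_mul le_rfl h2 (by positivity) (abs_nonneg _)) h3
              (abs_nonneg _) (by positivity)
        _ = |cBes N k m| * C := by ring
  have hsum : Summable fun m => ∫ x in Set.Ioc (-1:ℝ) 1, ‖f m x‖ :=
    Summable.of_nonneg_of_le
      (fun m => MeasureTheory.integral_nonneg (fun x => norm_nonneg _)) hbound
      (((summable_cBes_abs N k).mul_right C).mul_right 2)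
  rw [← MeasureTheory.integral_tsum_of_summable_integral_norm hmeas hsum]
  apply tsum_congr
  intro m
  rw [← intervalIntegral.integral_of_le (by norm_num : (-1:ℝ) ≤ 1)]
  rw [show f m = fun x => cBes N k m * (x^(2*m+N) * (legP L).eval x) from
    funext fun x => mul_assoc _ _ _]
  rw [intervalIntegral.integral_const_mul]
  rfl


set_option maxHeartbeats 2000000 in
lemma facC (n : ℕ) : ((n+1)! : ℂ) = ((n:ℂ)+1) * ((n)! : ℂ) := by
  rw [Nat.factorial_succ]; push_cast; ring

lemma facC_ne (n : ℕ) : ((n)! : ℂ) ≠ 0 := Nat.cast_ne_zero.2 (n).factorial_ne_zero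

set_option maxHeartbeats 4000000 in
theorem aLN_eq (L N : ℕ) (hNL : N ≤ L) (hpar : (L + N) % 2 = 0) (k : ℝ) :
    (aLN L N k : ℂ) =
      (Real.sqrt Real.pi : ℂ) * 2 ^ (-(2 * (L : ℤ)) - 2) * (2 * (L : ℂ) + 1) * (k : ℂ) ^ L *
          Complex.I ^ ((L : ℤ) - (N : ℤ)) * (1 + (-1 : ℂ) ^ (L + N)) /
          Complex.Gamma ((L : ℂ) + 3 / 2) * (L.choose ((L - N) / 2) : ℂ) *
        hyp [(L : ℂ) / 2 + 1 / 2, (L : ℂ) / 2 + 1]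
          [(L : ℂ) + 3 / 2, ((L : ℂ) - (N : ℂ)) / 2 + 1, ((L : ℂ) + (N : ℂ)) / 2 + 1]
          (-(k : ℂ) ^ 2 / 4) := by
  obtain ⟨a0, ha0⟩ : ∃ a, L = N + 2*a := ⟨(L-N)/2, by omega⟩
  have hser : aLN L N k = ((2*(L:ℝ)+1)/2) * ∑' j : ℕ, (cBes N k (j+a0) *
      (2^(L+1) * ((L+2*j)! : ℝ) * ((L+j)! : ℝ) / (((j)! : ℝ) * ((2*L+2*j+1)! : ℝ)))) := by
    rw [aLN_series]
    congr 1
    have hinj : Function.Injective (fun j : ℕ => j + a0) := fun x y h => by simpa using h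
    have hsupp : Function.support (fun m => cBes N k m * mom (2*m+N) L) ⊆
        Set.range (fun j : ℕ => j + a0) := by
      intro m hm
      rcases le_or_gt a0 m with h | h
      · exact ⟨m - a0, show m - a0 + a0 = m from by omega⟩
      · exfalso
        apply hm
        show cBes N k m * mom (2*m+N) L = 0
        rw [mom_lt L (2*m+N) (by omega), mul_zero]
    rw [← Function.Injective.tsum_eq hinj hsupp]
    apply tsum_congr
    intro j
    show cBes N k (j+a0) * mom (2*(j+a0)+N) L = _
    rw [show 2*(j+a0)+N = L+2*j from by omega, mom_val L j]
  rw [hser, Complex.ofReal_mul, Complex.ofReal_tsum, hyp]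
  simp only [List.map_cons, List.map_nil, List.prod_cons, List.prod_nil, mul_one]
  rw [← tsum_mul_left, ← tsum_mul_left]
  apply tsum_congr
  intro j
  -- structural rewrites
  rw [show ((L:ℂ)-(N:ℂ))/2 + 1 = ((a0:ℕ):ℂ)+1 from by rw [ha0]; push_cast; ring]
  rw [show ((L:ℂ)+(N:ℂ))/2 + 1 = ((a0+N:ℕ):ℂ)+1 from by rw [ha0]; push_cast; ring]
  rw [poch_a L j, poch_b1 L j, poch_nat a0 j, poch_nat (a0+N) j]
  rw [show (L:ℂ)+3/2 = ((L+1:ℕ):ℂ)+1/2 from by push_cast; ring, gammaHalf (L+1)]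
  rw [show 2*(L+1) = 2*L+2 from by ring]
  rw [show (L:ℤ)-(N:ℤ) = ((2*a0:ℕ):ℤ) from by omega, zpow_natCast, pow_mul, Complex.I_sq]
  rw [show L+N = 2*(N+a0) from by omega, pow_mul, neg_one_sq, one_pow]
  rw [show -(2*(L:ℤ))-2 = -((2*L+2:ℕ):ℤ) from by push_cast; ring, zpow_neg, zpow_natCast]
  rw [show (L-N)/2 = a0 from by omega, Nat.cast_choose ℂ (show a0 ≤ L from by omega),
    show L - a0 = a0+N from by omega]
  rw [show ((2*L+2*j+2)! : ℂ) = ((2*L+2*j+2 : ℕ):ℂ) * ((2*L+2*j+1)! : ℂ) from by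
    rw [show 2*L+2*j+2 = (2*L+2*j+1)+1 from by ring, Nat.factorial_succ]; push_cast; ring]
  rw [show ((L+j+1)! : ℂ) = ((L+j+1 : ℕ):ℂ) * ((L+j)! : ℂ) from by
    rw [Nat.factorial_succ]; push_cast; ring]
  rw [show ((2*L+2*j+2 : ℕ):ℂ) = 2 * ((L+j+1 : ℕ):ℂ) from by push_cast; ring]
  simp only [cBes]
  rw [show 2*(j+a0)+N = L+2*j from by omega]
  rw [show j+a0 = a0+j from by ring]
  rw [show a0+j+N = a0+N+j from by omega]
  push_cast
  rw [show ((k:ℂ)/2)^(L+2*j) = ((k:ℂ)^L * ((k:ℂ)^2)^j) / ((2:ℂ)^L * (4:ℂ)^j) from by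
    rw [div_pow, pow_add, pow_mul, pow_add, pow_mul]; norm_num]
  rw [show (-(k:ℂ)^2/4)^j = ((-1:ℂ)^j * ((k:ℂ)^2)^j) / (4:ℂ)^j from by
    rw [div_pow, neg_pow]]
  rw [show (2:ℂ)^(2*L+2) = ((2:ℂ)^L)^2 * 4 from by rw [pow_add, mul_comm 2 L, pow_mul]; norm_num]
  rw [show (2:ℂ)^(L+1) = (2:ℂ)^L * 2 from pow_succ 2 L]
  rw [show (4:ℂ)^(L+1) = ((2:ℂ)^L)^2 * 4 from by
    rw [pow_succ, show (4:ℂ) = 2^2 from by norm_num, ← pow_mul, mul_comm 2 L, pow_mul]]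
  rw [pow_add (-1:ℂ) a0 j]
  have ne1 : ((j)! : ℂ) ≠ 0 := facC_ne j
  have ne2 : ((2*L+2*j+1)! : ℂ) ≠ 0 := facC_ne _
  have ne3 : ((L)! : ℂ) ≠ 0 := facC_ne L
  have ne4 : ((L+1)! : ℂ) ≠ 0 := facC_ne (L+1)
  have ne5 : ((2*L+2)! : ℂ) ≠ 0 := facC_ne (2*L+2)
  have ne6 : ((L+j)! : ℂ) ≠ 0 := facC_ne (L+j)
  have ne7 : ((L+2*j)! : ℂ) ≠ 0 := facC_ne (L+2*j)
  have ne8 : ((a0)! : ℂ) ≠ 0 := facC_ne a0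
  have ne9 : ((a0+N)! : ℂ) ≠ 0 := facC_ne (a0+N)
  have ne10 : ((a0+j)! : ℂ) ≠ 0 := facC_ne (a0+j)
  have ne11 : ((a0+N+j)! : ℂ) ≠ 0 := facC_ne (a0+N+j)
  have ne12 : (2:ℂ) ≠ 0 := two_ne_zero
  have ne13 : (4:ℂ)^j ≠ 0 := pow_ne_zero _ (by norm_num)
  have ne14 : (2:ℂ)^L ≠ 0 := pow_ne_zero _ ne12
  have ne17 : ((Real.sqrt Real.pi : ℝ) : ℂ) ≠ 0 :=
    Complex.ofReal_ne_zero.2 (Real.sqrt_ne_zero'.2 Real.pi_pos)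
  have ne19 : (L:ℂ)+(j:ℂ)+1 ≠ 0 := by
    have h : ((L+j+1:ℕ):ℂ) ≠ 0 := Nat.cast_ne_zero.2 (by omega)
    push_cast at h; exact h
  have ne20 : (((2:ℂ)^L)^2) ≠ 0 := pow_ne_zero _ ne14
  have ne21 : (4:ℂ) ≠ 0 := by norm_num
  rw [show 2 * ((L:ℂ) + (j:ℂ) + 1) * ((2 * L + 2 * j + 1)! : ℂ) * ((L + 1)! : ℂ) /
        (4 ^ j * (((L:ℂ) + (j:ℂ) + 1) * ((L + j)! : ℂ)) * ((2 * L + 2)! : ℂ)) =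
      2 * ((2 * L + 2 * j + 1)! : ℂ) * ((L + 1)! : ℂ) /
        (4 ^ j * ((L + j)! : ℂ) * ((2 * L + 2)! : ℂ)) from by
    rw [show 2 * ((L:ℂ) + (j:ℂ) + 1) * ((2 * L + 2 * j + 1)! : ℂ) * ((L + 1)! : ℂ) =
      ((L:ℂ) + (j:ℂ) + 1) * (2 * ((2 * L + 2 * j + 1)! : ℂ) * ((L + 1)! : ℂ)) from by ring,
      show (4:ℂ) ^ j * (((L:ℂ) + (j:ℂ) + 1) * ((L + j)! : ℂ)) * ((2 * L + 2)! : ℂ) =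
      ((L:ℂ) + (j:ℂ) + 1) * ((4:ℂ)^j * ((L + j)! : ℂ) * ((2 * L + 2)! : ℂ)) from by ring,
      mul_div_mul_left _ _ ne19]]
  rw [show (2 * (L:ℂ) + 1) / 2 *
      ((-1) ^ a0 * (-1) ^ j / (((a0 + j)! : ℂ) * ((a0 + N + j)! : ℂ)) * ((k:ℂ) ^ L * ((k:ℂ) ^ 2) ^ j / (2 ^ L * 4 ^ j)) *
        (2 ^ L * 2 * ((L + 2 * j)! : ℂ) * ((L + j)! : ℂ) / (((j)! : ℂ) * ((2 * L + 2 * j + 1)! : ℂ)))) =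
      ((2 * (L:ℂ) + 1) * ((-1)^a0) * ((-1)^j) * (k:ℂ)^L * ((k:ℂ)^2)^j * (2:ℂ)^L * 2 * ((L + 2 * j)! : ℂ) * ((L + j)! : ℂ)) /
      (2 * ((a0 + j)! : ℂ) * ((a0 + N + j)! : ℂ) * (2:ℂ)^L * (4:ℂ)^j * ((j)! : ℂ) * ((2 * L + 2 * j + 1)! : ℂ)) from by
    ring]
  rw [show ((Real.sqrt Real.pi : ℝ) : ℂ) * ((2 ^ L) ^ 2 * 4)⁻¹ * (2 * (L:ℂ) + 1) * (k:ℂ) ^ L * (-1) ^ a0 * (1 + 1) /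
          (((Real.sqrt Real.pi : ℝ) : ℂ) * ((2 * L + 2)! : ℂ) / ((2 ^ L) ^ 2 * 4 * ((L + 1)! : ℂ))) *
        (((L)! : ℂ) / (((a0)! : ℂ) * ((a0 + N)! : ℂ))) *
      (((L + 2 * j)! : ℂ) / (((L)! : ℂ) * 4 ^ j) /
            (2 * ((2 * L + 2 * j + 1)! : ℂ) * ((L + 1)! : ℂ) /
                (4 ^ j * ((L + j)! : ℂ) * ((2 * L + 2)! : ℂ)) *
              (((a0 + j)! : ℂ) / ((a0)! : ℂ) * (((a0 + N + j)! : ℂ) / ((a0 + N)! : ℂ)))) *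
          ((-1) ^ j * ((k:ℂ) ^ 2) ^ j / 4 ^ j) /
        ((j)! : ℂ)) =
      (((Real.sqrt Real.pi : ℝ) : ℂ) * (2 * (L:ℂ) + 1) * (k:ℂ)^L * ((-1)^a0) * 2 * (((2:ℂ)^L)^2) * 4 * ((L+1)! : ℂ) *
        ((L)! : ℂ) * ((L + 2 * j)! : ℂ) * (4:ℂ)^j * ((L + j)! : ℂ) * ((2*L+2)! : ℂ) *
        ((a0)! : ℂ) * ((a0 + N)! : ℂ) * ((-1)^j) * ((k:ℂ)^2)^j) /
      ((((2:ℂ)^L)^2) * 4 * ((Real.sqrt Real.pi : ℝ) : ℂ) * ((2*L+2)! : ℂ) * ((a0)! : ℂ) * ((a0 + N)! : ℂ) *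
        ((L)! : ℂ) * (4:ℂ)^j * 2 * ((2 * L + 2 * j + 1)! : ℂ) * ((L+1)! : ℂ) *
        ((a0 + j)! : ℂ) * ((a0 + N + j)! : ℂ) * (4:ℂ)^j * ((j)! : ℂ)) from by
    simp only [div_eq_mul_inv, mul_inv, inv_inv]
    ring]
  rw [div_eq_div_iff (by apply_rules [mul_ne_zero]) (by apply_rules [mul_ne_zero])]
  ring
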